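/- Let H be a connected subgraph of a finite connected directed weighted graph G satisfying the Kirchhoff assumption, with #V_G = n and #V_H = r. Then for every 1 ≤ k ≤ r, the k-th smallest eigenvalue of the Dirichlet operator S^D_H is at most the (k + n − r)-th smallest eigenvalue of S_G: λ_k(S^D_H) ≤ λ_{k+n−r}(S_G). -/

import Mathlib

open Finset

/-- The weighted inner product `(f,g)_m = ∑_x m(x) f(x) conj(g(x))` on functions `W → ℂ`. -/
noncomputable def innerM {W : Type*} [Fintype W] (m : W → ℝ) (f g : W → ℂ) : ℂ :=
  ∑ x, (m x : ℂ) * f x * (starRingEnd ℂ) (g x)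

/-- The self-adjoint operator `S f(x) = (1/m(x)) ∑_y a(x,y) (f(x) - f(y))`, where
`a(x,y) = b(x,y) + b(y,x)`. -/
noncomputable def opS {W : Type*} [Fintype W] (m : W → ℝ) (b : W → W → ℝ)
    (f : W → ℂ) (x : W) : ℂ :=
  (1 / (m x : ℂ)) * ∑ y, ((b x y + b y x : ℝ) : ℂ) * (f x - f y)

/-- `μ : Fin N → ℝ` lists, increasingly and with multiplicity, eigenvalues of the operator
`S` which is self-adjoint for the weighted inner product with weight `m`: `μ` is monotone
and there is a corresponding `m`-orthonormal family of eigenfunctions.  When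
`N = dim = card W`, such a family is an orthonormal basis, so `μ` is exactly the increasing
enumeration `λ_1 ≤ … ≤ λ_N` of the eigenvalues of `S` with multiplicity. -/
def IsMonoEigenListing {W : Type*} [Fintype W] (m : W → ℝ)
    (S : (W → ℂ) → (W → ℂ)) {N : ℕ} (μ : Fin N → ℝ) : Prop :=
  Monotone μ ∧ ∃ u : Fin N → (W → ℂ),
    (∀ i j, innerM m (u i) (u j) = if i = j then 1 else 0) ∧
    ∀ i, S (u i) = fun x => ((μ i : ℝ) : ℂ) * u i x

/-- `x` and `y` are neighbours in the directed weighted graph with edge weight `b`. -/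
def Nbr {V : Type*} (b : V → V → ℝ) (x y : V) : Prop := 0 < b x y ∨ 0 < b y x

/-- Kirchhoff assumption: `β⁺(x) = β⁻(x)` for all `x`. -/
def Kirchhoff {V : Type*} [Fintype V] (b : V → V → ℝ) : Prop :=
  ∀ x, ∑ y, b x y = ∑ y, b y x

/-- The graph with edge weight `b` is connected, ignoring orientation. -/
def ConnectedGraph {V : Type*} (b : V → V → ℝ) : Prop :=
  ∀ x y : V, Relation.ReflTransGen (Nbr b) x y

/-- The subgraph of `b` induced on `U` is connected, ignoring orientation. -/
def ConnOn {V : Type*} (b : V → V → ℝ) (U : Finset V) : Prop :=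
  ∀ x ∈ U, ∀ y ∈ U,
    Relation.ReflTransGen (fun u v => u ∈ U ∧ v ∈ U ∧ Nbr b u v) x y

/-- The interior of a set of vertices: those of its vertices all of whose neighbours lie
in the set. -/
def interiorSet {V : Type*} (b : V → V → ℝ) (Ω : Set V) : Set V :=
  {x | x ∈ Ω ∧ ∀ y, Nbr b x y → y ∈ Ω}

/-- The operator `S_H` of the subgraph induced on `U` (weights restricted from the ambient
graph), acting on functions `↥U → ℂ`. -/
noncomputable def opSsub {V : Type*} [Fintype V] (m : V → ℝ) (b : V → V → ℝ)
    (U : Finset V) : (↥U → ℂ) → (↥U → ℂ) :=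
  opS (fun x : ↥U => m ↑x) (fun x y : ↥U => b ↑x ↑y)

/-- The Dirichlet operator `S^D_U`, acting on functions supported in `U` (identified with
functions `↥U → ℂ`, extended by zero): `S^D_U f(x) = (1/m(x)) ∑_{y ∈ V} a(x,y)(f(x)-f(y))`
for `x ∈ U`. -/
noncomputable def opSDir {V : Type*} [Fintype V] [DecidableEq V] (m : V → ℝ) (b : V → V → ℝ)
    (U : Finset V) (f : ↥U → ℂ) (x : ↥U) : ℂ :=
  (1 / (m ↑x : ℂ)) * ∑ y : V, ((b ↑x y + b y ↑x : ℝ) : ℂ) *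
    (f x - (if h : y ∈ U then f ⟨y, h⟩ else 0))

/-- The Dirichlet Laplacian `Δ^D_U`, acting on functions supported in `U`:
`Δ^D_U f(x) = (1/m(x)) ∑_{y ∈ V} b(x,y)(f(x)-f(y))` for `x ∈ U`. -/
noncomputable def opDeltaDir {V : Type*} [Fintype V] [DecidableEq V] (m : V → ℝ) (b : V → V → ℝ)
    (U : Finset V) (f : ↥U → ℂ) (x : ↥U) : ℂ :=
  (1 / (m ↑x : ℂ)) * ∑ y : V, ((b ↑x y : ℝ) : ℂ) *
    (f x - (if h : y ∈ U then f ⟨y, h⟩ else 0))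

namespace Stmt17Aux

lemma innerM_ortho_sum {W : Type*} [Fintype W] (m : W → ℝ) {N : ℕ} {w : Fin N → (W → ℂ)}
    (hw : ∀ i j, innerM m (w i) (w j) = if i = j then 1 else 0) (a c : Fin N → ℂ) :
    innerM m (fun x => ∑ i, a i * w i x) (fun x => ∑ j, c j * w j x)
      = ∑ i, a i * (starRingEnd ℂ) (c i) := by
  simp only [innerM] at hw ⊢
  have step : ∀ x : W, (m x : ℂ) * (∑ i, a i * w i x) * (starRingEnd ℂ) (∑ j, c j * w j x)
      = ∑ j, ∑ i, (a i * (starRingEnd ℂ) (c j)) * ((m x:ℂ) * w i x * (starRingEnd ℂ) (w j x)) := by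
    intro x
    rw [map_sum, Finset.mul_sum]
    refine Finset.sum_congr rfl fun j _ => ?_
    rw [Finset.mul_sum, Finset.sum_mul]
    refine Finset.sum_congr rfl fun i _ => ?_
    simp only [map_mul]
    ring
  rw [Finset.sum_congr rfl (fun x _ => step x), Finset.sum_comm]
  have inner1 : ∀ j, ∑ x : W, ∑ i, (a i * (starRingEnd ℂ) (c j)) * ((m x:ℂ) * w i x * (starRingEnd ℂ) (w j x))
      = a j * (starRingEnd ℂ) (c j) := by
    intro j
    rw [Finset.sum_comm]
    have : ∀ i, ∑ x : W, (a i * (starRingEnd ℂ) (c j)) * ((m x:ℂ) * w i x * (starRingEnd ℂ) (w j x))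
        = (a i * (starRingEnd ℂ) (c j)) * (if i = j then 1 else 0) := by
      intro i; rw [← Finset.mul_sum, hw i j]
    rw [Finset.sum_congr rfl (fun i _ => this i)]
    simp
  rw [Finset.sum_congr rfl (fun j _ => inner1 j)]


lemma innerM_ortho_single {W : Type*} [Fintype W] (m : W → ℝ) {N : ℕ} {w : Fin N → (W → ℂ)}
    (hw : ∀ i j, innerM m (w i) (w j) = if i = j then 1 else 0) (a : Fin N → ℂ) (j : Fin N) :
    innerM m (fun x => ∑ i, a i * w i x) (w j) = a j := by
  have h1 : w j = fun x => ∑ j' : Fin N, (if j' = j then (1:ℂ) else 0) * w j' x := by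
    funext x; simp
  rw [h1, innerM_ortho_sum m hw]
  have : ∀ i : Fin N, a i * (starRingEnd ℂ) (if i = j then (1:ℂ) else 0)
      = if i = j then a i else 0 := by
    intro i; split <;> simp
  rw [Finset.sum_congr rfl (fun i _ => this i)]
  simp

lemma ortho_linearIndependent {W : Type*} [Fintype W] (m : W → ℝ) {N : ℕ}
    {w : Fin N → (W → ℂ)}
    (hw : ∀ i j, innerM m (w i) (w j) = if i = j then 1 else 0) :
    LinearIndependent ℂ w := by
  rw [Fintype.linearIndependent_iff]
  intro g hg j
  have h0 : (fun x => ∑ i, g i * w i x) = (0 : W → ℂ) := by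
    funext x
    have := congrFun hg x
    simpa using this
  have := innerM_ortho_single m hw g j
  rw [h0] at this
  simpa [innerM] using this.symm

lemma opS_sum {W : Type*} [Fintype W] (m : W → ℝ) (b : W → W → ℝ) {N : ℕ}
    (w : Fin N → (W → ℂ)) (c : Fin N → ℂ) (x : W) :
    opS m b (fun x => ∑ i, c i * w i x) x = ∑ i, c i * opS m b (w i) x := by
  simp only [opS]
  have step : ∀ y : W, ((b x y + b y x : ℝ) : ℂ) * ((∑ i, c i * w i x) - ∑ i, c i * w i y)
      = ∑ i, c i * (((b x y + b y x : ℝ) : ℂ) * (w i x - w i y)) := by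
    intro y
    rw [← Finset.sum_sub_distrib, Finset.mul_sum]
    refine Finset.sum_congr rfl fun i _ => ?_
    ring
  rw [Finset.sum_congr rfl (fun y _ => step y), Finset.sum_comm, Finset.mul_sum]
  refine Finset.sum_congr rfl fun i _ => ?_
  rw [← Finset.mul_sum]
  ring

lemma opSDir_sum {V : Type*} [Fintype V] [DecidableEq V] (m : V → ℝ) (b : V → V → ℝ)
    (U : Finset V) {N : ℕ} (w : Fin N → (↥U → ℂ)) (c : Fin N → ℂ) (x : ↥U) :
    opSDir m b U (fun x => ∑ i, c i * w i x) x = ∑ i, c i * opSDir m b U (w i) x := by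
  simp only [opSDir]
  have step : ∀ y : V, ((b ↑x y + b y ↑x : ℝ) : ℂ) *
      ((∑ i, c i * w i x) - (if h : y ∈ U then ∑ i, c i * w i ⟨y, h⟩ else 0))
      = ∑ i, c i * (((b ↑x y + b y ↑x : ℝ) : ℂ) *
          (w i x - (if h : y ∈ U then w i ⟨y, h⟩ else 0))) := by
    intro y
    have : (if h : y ∈ U then ∑ i, c i * w i ⟨y, h⟩ else 0)
        = ∑ i, c i * (if h : y ∈ U then w i ⟨y, h⟩ else 0) := by
      split <;> simp
    rw [this, ← Finset.sum_sub_distrib, Finset.mul_sum]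
    refine Finset.sum_congr rfl fun i _ => ?_
    ring
  rw [Finset.sum_congr rfl (fun y _ => step y), Finset.sum_comm, Finset.mul_sum]
  refine Finset.sum_congr rfl fun i _ => ?_
  rw [← Finset.mul_sum]
  ring


lemma exists_ker_vec {d : ℕ} {T : Type*} [AddCommGroup T] [Module ℂ T] [FiniteDimensional ℂ T]
    (L : (Fin d → ℂ) →ₗ[ℂ] T) (h : Module.finrank ℂ T < d) :
    ∃ c : Fin d → ℂ, c ≠ 0 ∧ L c = 0 := by
  have h1 := LinearMap.finrank_range_add_finrank_ker L
  have h2 : Module.finrank ℂ (Fin d → ℂ) = d := by simp [Module.finrank_fintype_fun_eq_card]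
  have h3 : Module.finrank ℂ (LinearMap.range L) ≤ Module.finrank ℂ T :=
    Submodule.finrank_le _
  have h4 : 0 < Module.finrank ℂ (LinearMap.ker L) := by
    rw [h2] at h1; omega
  have h5 : LinearMap.ker L ≠ ⊥ := by
    intro hbot
    rw [hbot, finrank_bot] at h4
    omega
  obtain ⟨c, hc, hc0⟩ := Submodule.exists_mem_ne_zero_of_ne_bot h5
  exact ⟨c, hc0, hc⟩


lemma ortho_expansion {W : Type*} [Fintype W] (m : W → ℝ) {N : ℕ}
    {w : Fin N → (W → ℂ)}
    (hw : ∀ i j, innerM m (w i) (w j) = if i = j then 1 else 0)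
    (hN : N = Fintype.card W) (g : W → ℂ) :
    g = fun x => ∑ j, innerM m g (w j) * w j x := by
  rcases Nat.eq_zero_or_pos N with hN0 | hNpos
  · subst hN0
    have hWe : IsEmpty W := by
      rw [← Fintype.card_eq_zero_iff]; omega
    funext x
    exact (hWe.elim x)
  have : Nonempty (Fin N) := ⟨⟨0, hNpos⟩⟩
  have hli := ortho_linearIndependent m hw
  have hcard : Fintype.card (Fin N) = Module.finrank ℂ (W → ℂ) := by
    simp [Module.finrank_fintype_fun_eq_card, hN]
  let B := basisOfLinearIndependentOfCardEqFinrank hli hcard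
  have hB : ∀ i, B i = w i := fun i =>
    congrFun (coe_basisOfLinearIndependentOfCardEqFinrank hli hcard) i
  have hrep := B.sum_repr g
  have hg : g = fun x => ∑ i, B.repr g i * w i x := by
    funext x
    conv_lhs => rw [← hrep]
    simp only [Finset.sum_apply, Pi.smul_apply, smul_eq_mul]
    exact Finset.sum_congr rfl fun i _ => by rw [hB]
  have hco : ∀ j, innerM m g (w j) = B.repr g j := by
    intro j
    conv_lhs => rw [hg]
    exact innerM_ortho_single m hw _ j
  conv_lhs => rw [hg]
  funext x
  exact Finset.sum_congr rfl fun j _ => by rw [hco j]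


end Stmt17Aux

/-- let `H` be a connected subgraph (on vertex set `U`, `#U = r`) of a finite
connected directed weighted graph `G` (`#V = n`) satisfying the Kirchhoff assumption.
Then for every `1 ≤ k ≤ r`, `λ_k(S^D_H) ≤ λ_{k+n-r}(S_G)`. -/
theorem stmt17 {V : Type*} [Fintype V] [DecidableEq V] (m : V → ℝ) (b : V → V → ℝ)
    (hm : ∀ x, 0 < m x) (hb : ∀ x y, 0 ≤ b x y) (hloop : ∀ x, b x x = 0)
    (hconn : ConnectedGraph b) (hkirch : Kirchhoff b)
    (U : Finset V) (hUconn : ConnOn b U)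
    (n r : ℕ) (hn : n = Fintype.card V) (hr : r = U.card) (hrn : r ≤ n)
    (μG : Fin n → ℝ) (μD : Fin r → ℝ)
    (hμG : IsMonoEigenListing m (opS m b) μG)
    (hμD : IsMonoEigenListing (fun x : ↥U => m ↑x) (opSDir m b U) μD) :
    ∀ k : Fin r, μD k ≤ μG ⟨k.1 + n - r, by have := k.isLt; omega⟩ := by
  classical
  obtain ⟨monoG, v, hvon, hveig⟩ := hμG
  obtain ⟨monoD, u, huon, hueig⟩ := hμD
  intro k
  have hKr : k.1 < r := k.isLt
  set K : ℕ := k.1 with hK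
  set d : ℕ := K + (n - r) + 1 with hd
  have hdn : d ≤ n := by omega
  set idx : Fin n := ⟨k.1 + n - r, by omega⟩ with hidx
  set m' : ↥U → ℝ := fun x => m ↑x with hm'
  -- the shifted orthonormal family on the G side
  set e : Fin d → Fin n := Fin.castLE hdn with he
  set w : Fin d → (V → ℂ) := fun i => v (e i) with hw
  have hwon : ∀ i j, innerM m (w i) (w j) = if i = j then 1 else 0 := by
    intro i j
    rw [hw]
    simp only []
    rw [hvon (e i) (e j)]
    congr 1
    simp only [eq_iff_iff]
    constructor
    · intro hij
      exact Fin.ext (by simpa [he, Fin.castLE] using congrArg Fin.val hij)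
    · intro hij; rw [hij]
  have hcardU : Fintype.card ↥U = r := by rw [Fintype.card_coe, hr]
  have hcardSc : Fintype.card {x : V // x ∉ U} = n - r := by
    rw [Fintype.card_subtype_compl, Fintype.card_coe, hn, hr]
  -- the constraint linear map
  let L : (Fin d → ℂ) →ₗ[ℂ] (({x : V // x ∉ U} → ℂ) × (Fin K → ℂ)) :=
    { toFun := fun c =>
        (fun z => ∑ i, c i * w i ↑z,
         fun j => innerM m' (fun x : ↥U => ∑ i, c i * w i ↑x) (u (Fin.castLE hKr.le j))),
      map_add' := by
        intro c1 c2
        refine Prod.ext ?_ ?_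
        · funext z
          simp [add_mul, Finset.sum_add_distrib]
        · funext j
          simp only [innerM, Prod.snd_add, Pi.add_apply]
          rw [← Finset.sum_add_distrib]
          refine Finset.sum_congr rfl fun x _ => ?_
          have : (∑ i, (c1 i + c2 i) * w i (↑x : V))
              = (∑ i, c1 i * w i ↑x) + (∑ i, c2 i * w i ↑x) := by
            rw [← Finset.sum_add_distrib]
            exact Finset.sum_congr rfl fun i _ => by ring
          rw [this]; ring
      map_smul' := by
        intro s c
        refine Prod.ext ?_ ?_
        · funext z
          simp [Finset.mul_sum, mul_assoc]
        · funext j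
          show _ = s • (fun j : Fin K => innerM m' (fun x : ↥U => ∑ i, c i * w i ↑x) (u (Fin.castLE hKr.le j))) j
          simp only [innerM, smul_eq_mul, Pi.smul_apply]
          rw [Finset.mul_sum]
          refine Finset.sum_congr rfl fun x _ => ?_
          have : (∑ i, (s * c i) * w i (↑x : V)) = s * ∑ i, c i * w i ↑x := by
            rw [Finset.mul_sum]
            exact Finset.sum_congr rfl fun i _ => by ring
          rw [this]; ring }
  have hfrk : Module.finrank ℂ (({x : V // x ∉ U} → ℂ) × (Fin K → ℂ)) < d := by
    rw [Module.finrank_prod, Module.finrank_fintype_fun_eq_card,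
      Module.finrank_fintype_fun_eq_card, hcardSc, Fintype.card_fin]
    omega
  obtain ⟨c, hc0, hLc⟩ := Stmt17Aux.exists_ker_vec L hfrk
  have hzero : ∀ z : {x : V // x ∉ U}, (∑ i, c i * w i ↑z) = 0 := by
    intro z
    have := congrFun (congrArg Prod.fst hLc) z
    simpa [L] using this
  have horth : ∀ j : Fin K,
      innerM m' (fun x : ↥U => ∑ i, c i * w i ↑x) (u (Fin.castLE hKr.le j)) = 0 := by
    intro j
    have := congrFun (congrArg Prod.snd hLc) j
    simpa [L] using this
  set F : V → ℂ := fun x => ∑ i, c i * w i x with hF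
  have hsupp : ∀ x : V, x ∉ U → F x = 0 := fun x hx => hzero ⟨x, hx⟩
  set g : ↥U → ℂ := fun x => F ↑x with hg
  set dc : Fin r → ℂ := fun j => innerM m' g (u j) with hdc
  have hgexp : g = fun x => ∑ j, dc j * u j x :=
    Stmt17Aux.ortho_expansion m' huon hcardU.symm g
  have hdc0 : ∀ j : Fin r, j.1 < K → dc j = 0 := by
    intro j hj
    have h1 := horth ⟨j.1, hj⟩
    have h2 : Fin.castLE hKr.le ⟨j.1, hj⟩ = j := rfl
    rw [h2] at h1
    exact h1
  -- G-side computations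
  have hPG : innerM m F F = ((∑ i, Complex.normSq (c i) : ℝ) : ℂ) := by
    rw [hF, Stmt17Aux.innerM_ortho_sum m hwon c c,
      Finset.sum_congr rfl (fun i _ => Complex.mul_conj (c i))]
    norm_cast
  have hopSF : opS m b F = fun x => ∑ i, (c i * ((μG (e i) : ℝ) : ℂ)) * w i x := by
    funext x
    rw [hF, Stmt17Aux.opS_sum m b w c x]
    refine Finset.sum_congr rfl fun i _ => ?_
    rw [hw]
    simp only []
    rw [hveig (e i)]
    ring
  have hQG : innerM m (opS m b F) F
      = ((∑ i, μG (e i) * Complex.normSq (c i) : ℝ) : ℂ) := by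
    rw [hopSF, hF, Stmt17Aux.innerM_ortho_sum m hwon _ c]
    have step : ∀ i : Fin d, (c i * ((μG (e i) : ℝ) : ℂ)) * (starRingEnd ℂ) (c i)
        = ((μG (e i) * Complex.normSq (c i) : ℝ) : ℂ) := by
      intro i
      calc (c i * ((μG (e i) : ℝ) : ℂ)) * (starRingEnd ℂ) (c i)
          = ((μG (e i) : ℝ) : ℂ) * (c i * (starRingEnd ℂ) (c i)) := by ring
        _ = ((μG (e i) : ℝ) : ℂ) * ((Complex.normSq (c i) : ℝ) : ℂ) := by
            rw [Complex.mul_conj]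
        _ = ((μG (e i) * Complex.normSq (c i) : ℝ) : ℂ) := by push_cast; ring
    rw [Finset.sum_congr rfl (fun i _ => step i)]
    norm_cast
  -- D-side computations
  have hPD : innerM m' g g = ((∑ j, Complex.normSq (dc j) : ℝ) : ℂ) := by
    rw [hgexp, Stmt17Aux.innerM_ortho_sum m' huon dc dc,
      Finset.sum_congr rfl (fun j _ => Complex.mul_conj (dc j))]
    norm_cast
  have hopDg : opSDir m b U g = fun x => ∑ j, (dc j * ((μD j : ℝ) : ℂ)) * u j x := by
    funext x
    conv_lhs => rw [hgexp]
    rw [Stmt17Aux.opSDir_sum m b U u dc x]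
    refine Finset.sum_congr rfl fun j _ => ?_
    rw [hueig j]
    ring
  have hQD : innerM m' (opSDir m b U g) g
      = ((∑ j, μD j * Complex.normSq (dc j) : ℝ) : ℂ) := by
    rw [hopDg]
    conv_lhs => rw [hgexp]
    rw [Stmt17Aux.innerM_ortho_sum m' huon _ dc]
    have step : ∀ j : Fin r, (dc j * ((μD j : ℝ) : ℂ)) * (starRingEnd ℂ) (dc j)
        = ((μD j * Complex.normSq (dc j) : ℝ) : ℂ) := by
      intro j
      calc (dc j * ((μD j : ℝ) : ℂ)) * (starRingEnd ℂ) (dc j)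
          = ((μD j : ℝ) : ℂ) * (dc j * (starRingEnd ℂ) (dc j)) := by ring
        _ = ((μD j : ℝ) : ℂ) * ((Complex.normSq (dc j) : ℝ) : ℂ) := by
            rw [Complex.mul_conj]
        _ = ((μD j * Complex.normSq (dc j) : ℝ) : ℂ) := by push_cast; ring
    rw [Finset.sum_congr rfl (fun j _ => step j)]
    norm_cast
  -- transfer identities
  have hsum_split : ∀ h : V → ℂ, (∀ x ∉ U, h x = 0) → ∑ x : V, h x = ∑ x : ↥U, h ↑x := by
    intro h hh
    rw [Finset.sum_coe_sort U h]
    symm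
    apply Finset.sum_subset (Finset.subset_univ U)
    intro x _ hx
    exact hh x hx
  have hT1 : innerM m F F = innerM m' g g := by
    rw [innerM, innerM]
    rw [hsum_split _ (fun x hx => by simp [hsupp x hx])]
  have hopeq : ∀ x : ↥U, opSDir m b U g x = opS m b F ↑x := by
    intro x
    rw [opSDir, opS]
    congr 1
    refine Finset.sum_congr rfl fun y _ => ?_
    congr 1
    congr 1
    by_cases hy : y ∈ U
    · simp only [hy, dif_pos]
      rfl
    · simp only [hy, dif_neg, not_false_iff]
      rw [hsupp y hy]
  have hT2 : innerM m (opS m b F) F = innerM m' (opSDir m b U g) g := by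
    rw [innerM, innerM]
    rw [hsum_split _ (fun x hx => by simp [hsupp x hx])]
    refine Finset.sum_congr rfl fun x _ => ?_
    rw [hopeq x]
  -- real equalities
  have hPeq : (∑ i, Complex.normSq (c i)) = (∑ j, Complex.normSq (dc j)) := by
    have := hPG.symm.trans (hT1.trans hPD)
    exact_mod_cast this
  have hQeq : (∑ i, μG (e i) * Complex.normSq (c i))
      = (∑ j, μD j * Complex.normSq (dc j)) := by
    have := hQG.symm.trans (hT2.trans hQD)
    exact_mod_cast this
  have hPpos : 0 < ∑ i, Complex.normSq (c i) := by
    obtain ⟨i, hi⟩ := Function.ne_iff.mp hc0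
    refine Finset.sum_pos' (fun i _ => Complex.normSq_nonneg _) ⟨i, Finset.mem_univ i, ?_⟩
    exact Complex.normSq_pos.mpr hi
  have hQcle : (∑ i, μG (e i) * Complex.normSq (c i))
      ≤ μG idx * ∑ i, Complex.normSq (c i) := by
    rw [Finset.mul_sum]
    refine Finset.sum_le_sum fun i _ => ?_
    refine mul_le_mul_of_nonneg_right ?_ (Complex.normSq_nonneg _)
    apply monoG
    rw [Fin.le_def]
    simp only [he, Fin.castLE, hidx]
    omega
  have hQdge : μD k * (∑ j, Complex.normSq (dc j))
      ≤ ∑ j, μD j * Complex.normSq (dc j) := by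
    rw [Finset.mul_sum]
    refine Finset.sum_le_sum fun j _ => ?_
    by_cases hj : j.1 < K
    · rw [hdc0 j hj]
      simp
    · refine mul_le_mul_of_nonneg_right ?_ (Complex.normSq_nonneg _)
      apply monoD
      rw [Fin.le_def]
      omega
  have hfinal : μD k * (∑ i, Complex.normSq (c i)) ≤ μG idx * ∑ i, Complex.normSq (c i) := by
    calc μD k * (∑ i, Complex.normSq (c i)) = μD k * (∑ j, Complex.normSq (dc j)) := by
          rw [hPeq]
      _ ≤ ∑ j, μD j * Complex.normSq (dc j) := hQdge
      _ = ∑ i, μG (e i) * Complex.normSq (c i) := hQeq.symm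
      _ ≤ μG idx * ∑ i, Complex.normSq (c i) := hQcle
  exact le_of_mul_le_mul_right hfinal hPpos
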